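/- (FK representation for the single-preferred-spin model.) With h(σ) = −Σ_{{i,j}∈E} J_{i,j} δ(σ_i, σ_j) − Σ_{v_i} z_i δ(1, σ_i), the partition function satisfies Z(G) = Σ_{A⊆E(G)} X_{z_{C_1}} ⋯ X_{z_{C_{k(A)}}} ∏_{e∈A} (e^{β J_e} − 1), where z_{C_l} is the sum of z_i over vertices in the l-th component of (V(G), A) and X_z = q − 1 + e^{βz}. -/
import Mathlib


open Finset

structure WGraph (S : Type) (L : Type) where
  V : Type
  E : Type
  [fV : Fintype V]
  [dV : DecidableEq V]
  [fE : Fintype E]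
  [dE : DecidableEq E]
  ends : E → V × V
  ω : V → S
  γ : E → L

attribute [instance] WGraph.fV WGraph.dV WGraph.fE WGraph.dE

namespace WGraph
variable {S L : Type}

def IsLoop (G : WGraph S L) (e : G.E) : Prop := (G.ends e).1 = (G.ends e).2

def delete (G : WGraph S L) (e₀ : G.E) : WGraph S L where
  V := G.V
  E := {e : G.E // e ≠ e₀}
  ends := fun e => G.ends e.1
  ω := G.ω
  γ := fun e => G.γ e.1

def contract [Add S] (G : WGraph S L) (e₀ : G.E) (h : ¬ G.IsLoop e₀) : WGraph S L where
  V := {v : G.V // v ≠ (G.ends e₀).2}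
  E := {e : G.E // e ≠ e₀}
  ends := fun e =>
    ((if hv : (G.ends e.1).1 = (G.ends e₀).2 then ⟨(G.ends e₀).1, h⟩
        else ⟨(G.ends e.1).1, hv⟩ : {v : G.V // v ≠ (G.ends e₀).2}),
     (if hv : (G.ends e.1).2 = (G.ends e₀).2 then ⟨(G.ends e₀).1, h⟩
        else ⟨(G.ends e.1).2, hv⟩))
  ω := fun v =>
    if v.1 = (G.ends e₀).1 then G.ω (G.ends e₀).1 + G.ω (G.ends e₀).2 else G.ω v.1
  γ := fun e => G.γ e.1

def mapEdges {L' : Type} (G : WGraph S L) (φ : L → L') : WGraph S L' where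
  V := G.V
  E := G.E
  ends := G.ends
  ω := G.ω
  γ := φ ∘ G.γ

def stateGraph (G : WGraph S L) (A : Finset G.E) : SimpleGraph G.V :=
  SimpleGraph.fromRel (fun v w => ∃ e ∈ A, G.ends e = (v, w))

noncomputable instance (G : WGraph S L) (A : Finset G.E) :
    Fintype (G.stateGraph A).ConnectedComponent := Fintype.ofFinite _

noncomputable def kcomp (G : WGraph S L) (A : Finset G.E) : ℕ :=
  Fintype.card (G.stateGraph A).ConnectedComponent

open scoped Classical in
noncomputable def compWeight [AddCommMonoid S] (G : WGraph S L) (A : Finset G.E)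
    (c : (G.stateGraph A).ConnectedComponent) : S :=
  ∑ v ∈ Finset.univ.filter (fun v => (G.stateGraph A).connectedComponentMk v = c), G.ω v

end WGraph


section FKaux

open WGraph

variable {q : ℕ}

private lemma reach_eq (G : WGraph ℂ ℂ) (A : Finset G.E) (σ : G.V → Fin q)
    (hσ : ∀ e ∈ A, σ (G.ends e).1 = σ (G.ends e).2) {v w : G.V}
    (h : (G.stateGraph A).Reachable v w) : σ v = σ w := by
  obtain ⟨p⟩ := h
  induction p with
  | nil => rfl
  | cons hadj _ ih =>
    rw [← ih]
    rw [WGraph.stateGraph, SimpleGraph.fromRel_adj] at hadj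
    obtain ⟨-, ⟨e, he, heq⟩ | ⟨e, he, heq⟩⟩ := hadj
    · have := hσ e he; rw [heq] at this; exact this
    · have := hσ e he; rw [heq] at this; exact this.symm

private lemma FK_inner_sum (hq : 0 < q) (β : ℂ) (G : WGraph ℂ ℂ) (A : Finset G.E) :
    ∑ σ : G.V → Fin q,
      ((if ∀ e ∈ A, σ (G.ends e).1 = σ (G.ends e).2 then (1 : ℂ) else 0) *
        ∏ v : G.V,
          Complex.exp (β * (G.ω v * (if σ v = (⟨0, hq⟩ : Fin q) then 1 else 0)))) =
    ∏ c : (G.stateGraph A).ConnectedComponent,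
      ((q : ℂ) - 1 + Complex.exp (β * G.compWeight A c)) := by
  classical
  set SG := G.stateGraph A with hSG
  set F : (G.V → Fin q) → ℂ := fun σ =>
    ∏ v : G.V, Complex.exp (β * (G.ω v * (if σ v = (⟨0, hq⟩ : Fin q) then 1 else 0)))
    with hF
  set P : (G.V → Fin q) → Prop := fun σ => ∀ e ∈ A, σ (G.ends e).1 = σ (G.ends e).2
    with hP
  have step1 : (∑ σ : G.V → Fin q, (if P σ then (1 : ℂ) else 0) * F σ)
      = ∑ σ ∈ Finset.univ.filter P, F σ := by
    rw [Finset.sum_filter]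
    refine Finset.sum_congr rfl fun σ _ => ?_
    split <;> simp
  rw [show (∑ σ : G.V → Fin q,
      ((if ∀ e ∈ A, σ (G.ends e).1 = σ (G.ends e).2 then (1 : ℂ) else 0) *
        ∏ v : G.V,
          Complex.exp (β * (G.ω v * (if σ v = (⟨0, hq⟩ : Fin q) then 1 else 0)))))
      = ∑ σ : G.V → Fin q, (if P σ then (1 : ℂ) else 0) * F σ from rfl, step1]
  -- bijection with functions on connected components
  have step2 : (∑ σ ∈ Finset.univ.filter P, F σ)
      = ∑ τ : SG.ConnectedComponent → Fin q, F (fun v => τ (SG.connectedComponentMk v)) := by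
    refine Finset.sum_nbij' (i := fun σ => fun c => σ (Quot.out c))
      (j := fun τ => fun v => τ (SG.connectedComponentMk v)) ?_ ?_ ?_ ?_ ?_
    · intro σ _; exact Finset.mem_univ _
    · intro τ _
      simp only [Finset.mem_filter, Finset.mem_univ, true_and, hP]
      intro e he
      by_cases hloop : (G.ends e).1 = (G.ends e).2
      · rw [hloop]
      · have hadj : SG.Adj (G.ends e).1 (G.ends e).2 := by
          rw [hSG, WGraph.stateGraph, SimpleGraph.fromRel_adj]
          exact ⟨hloop, Or.inl ⟨e, he, rfl⟩⟩
        rw [SimpleGraph.ConnectedComponent.connectedComponentMk_eq_of_adj hadj]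
    · intro σ hσ
      simp only [Finset.mem_filter, Finset.mem_univ, true_and] at hσ
      funext v
      refine reach_eq G A σ hσ ?_
      exact SimpleGraph.ConnectedComponent.exact (Quot.out_eq (SG.connectedComponentMk v))
    · intro τ _
      funext c
      exact congrArg τ (Quot.out_eq c)
    · intro σ hσ
      simp only [Finset.mem_filter, Finset.mem_univ, true_and] at hσ
      have hfix : (fun v => σ (Quot.out (SG.connectedComponentMk v))) = σ := by
        funext v
        exact reach_eq G A σ hσ
          (SimpleGraph.ConnectedComponent.exact (Quot.out_eq (SG.connectedComponentMk v)))
      rw [hfix]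
  rw [step2]
  -- factor the product over components
  have step3 : ∀ τ : SG.ConnectedComponent → Fin q,
      F (fun v => τ (SG.connectedComponentMk v)) =
      ∏ c : SG.ConnectedComponent,
        (if τ c = (⟨0, hq⟩ : Fin q) then Complex.exp (β * G.compWeight A c) else 1) := by
    intro τ
    simp only [hF]
    rw [← Finset.prod_fiberwise_of_maps_to (g := SG.connectedComponentMk)
        (t := Finset.univ) (fun v _ => Finset.mem_univ _)]
    refine Finset.prod_congr rfl fun c _ => ?_
    by_cases hc : τ c = (⟨0, hq⟩ : Fin q)
    · rw [if_pos hc]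
      have : ∀ v ∈ Finset.univ.filter (fun v => SG.connectedComponentMk v = c),
          Complex.exp (β * (G.ω v * (if τ (SG.connectedComponentMk v) = (⟨0, hq⟩ : Fin q)
            then 1 else 0))) = Complex.exp (β * G.ω v) := by
        intro v hv
        simp only [Finset.mem_filter] at hv
        simp only [hv.2, if_pos hc, mul_one]
      rw [Finset.prod_congr rfl this, ← Complex.exp_sum, ← Finset.mul_sum]
      rfl
    · rw [if_neg hc]
      refine Finset.prod_eq_one fun v hv => ?_
      simp only [Finset.mem_filter] at hv
      simp only [hv.2, if_neg hc, mul_zero, Complex.exp_zero]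
  rw [Finset.sum_congr rfl fun τ _ => step3 τ]
  have hswap := Finset.prod_univ_sum
    (fun _ : SG.ConnectedComponent => (Finset.univ : Finset (Fin q)))
    (fun c t => if t = (⟨0, hq⟩ : Fin q) then Complex.exp (β * G.compWeight A c) else 1)
  rw [Fintype.piFinset_univ] at hswap
  rw [← hswap]
  refine Finset.prod_congr rfl fun c _ => ?_
  have : ∀ t : Fin q,
      (if t = (⟨0, hq⟩ : Fin q) then Complex.exp (β * G.compWeight A c) else 1)
      = (if t = (⟨0, hq⟩ : Fin q) then Complex.exp (β * G.compWeight A c) - 1 else 0) + 1 := by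
    intro t; split <;> ring
  rw [Finset.sum_congr rfl fun t _ => this t, Finset.sum_add_distrib,
    Finset.sum_ite_eq' Finset.univ (⟨0, hq⟩ : Fin q)
      (fun _ => Complex.exp (β * G.compWeight A c) - 1),
    if_pos (Finset.mem_univ _), Finset.sum_const, Finset.card_univ, Fintype.card_fin]
  ring

end FKaux

/-- FK representation, single-preferred-spin model:
`Z(G) = Σ_{A⊆E} X_{z_{C_1}} ⋯ X_{z_{C_{k(A)}}} Π_{e∈A}(e^{βJ_e}-1)` with
`X_z = q - 1 + e^{βz}` and `z_{C_l}` the sum of the `z_i` over the l-th component of `(V(G),A)`. -/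
theorem pottsZ_single_spin_FK (q : ℕ) (hq : 0 < q) (β : ℂ) (G : WGraph ℂ ℂ) :
    (∑ σ : G.V → Fin q, Complex.exp (-β *
        (-(∑ e : G.E, G.γ e * (if σ (G.ends e).1 = σ (G.ends e).2 then 1 else 0))
          - ∑ v : G.V, G.ω v * (if σ v = (⟨0, hq⟩ : Fin q) then 1 else 0)))) =
      ∑ A : Finset G.E,
        (∏ c : (G.stateGraph A).ConnectedComponent,
          ((q : ℂ) - 1 + Complex.exp (β * G.compWeight A c))) *
        ∏ e ∈ A, (Complex.exp (β * G.γ e) - 1) := by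
  classical
  have hsummand : ∀ σ : G.V → Fin q,
      Complex.exp (-β *
        (-(∑ e : G.E, G.γ e * (if σ (G.ends e).1 = σ (G.ends e).2 then 1 else 0))
          - ∑ v : G.V, G.ω v * (if σ v = (⟨0, hq⟩ : Fin q) then 1 else 0))) =
      (∏ e : G.E, ((Complex.exp (β * G.γ e) - 1) *
          (if σ (G.ends e).1 = σ (G.ends e).2 then 1 else 0) + 1)) *
      ∏ v : G.V, Complex.exp (β * (G.ω v * (if σ v = (⟨0, hq⟩ : Fin q) then 1 else 0))) := by
    intro σ
    rw [show -β *
        (-(∑ e : G.E, G.γ e * (if σ (G.ends e).1 = σ (G.ends e).2 then 1 else 0))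
          - ∑ v : G.V, G.ω v * (if σ v = (⟨0, hq⟩ : Fin q) then 1 else 0)) =
        (∑ e : G.E, β * (G.γ e * (if σ (G.ends e).1 = σ (G.ends e).2 then 1 else 0)))
        + ∑ v : G.V, β * (G.ω v * (if σ v = (⟨0, hq⟩ : Fin q) then 1 else 0)) by
      rw [← Finset.mul_sum, ← Finset.mul_sum]; ring]
    rw [Complex.exp_add, Complex.exp_sum, Complex.exp_sum]
    congr 1
    refine Finset.prod_congr rfl fun e _ => ?_
    by_cases h : σ (G.ends e).1 = σ (G.ends e).2
    · rw [if_pos h, mul_one, mul_one]; ring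
    · rw [if_neg h, mul_zero, mul_zero, Complex.exp_zero, mul_zero, zero_add]
  rw [Finset.sum_congr rfl fun σ _ => hsummand σ]
  have hexpand : ∀ σ : G.V → Fin q,
      (∏ e : G.E, ((Complex.exp (β * G.γ e) - 1) *
          (if σ (G.ends e).1 = σ (G.ends e).2 then 1 else 0) + 1)) =
      ∑ A : Finset G.E, ∏ e ∈ A, ((Complex.exp (β * G.γ e) - 1) *
          (if σ (G.ends e).1 = σ (G.ends e).2 then 1 else 0)) := by
    intro σ
    rw [Finset.prod_add, Finset.powerset_univ]
    refine Finset.sum_congr rfl fun A _ => ?_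
    rw [Finset.prod_const_one, mul_one]
  rw [Finset.sum_congr rfl fun σ _ => by rw [hexpand σ, Finset.sum_mul]]
  rw [Finset.sum_comm]
  refine Finset.sum_congr rfl fun A _ => ?_
  have hfac : ∀ σ : G.V → Fin q,
      (∏ e ∈ A, ((Complex.exp (β * G.γ e) - 1) *
          (if σ (G.ends e).1 = σ (G.ends e).2 then 1 else 0))) =
      (∏ e ∈ A, (Complex.exp (β * G.γ e) - 1)) *
        (if ∀ e ∈ A, σ (G.ends e).1 = σ (G.ends e).2 then 1 else 0) := by
    intro σ
    by_cases h : ∀ e ∈ A, σ (G.ends e).1 = σ (G.ends e).2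
    · rw [if_pos h, mul_one]
      refine Finset.prod_congr rfl fun e he => ?_
      rw [if_pos (h e he), mul_one]
    · rw [if_neg h, mul_zero]
      push_neg at h
      obtain ⟨e, he, hne⟩ := h
      exact Finset.prod_eq_zero he (by rw [if_neg hne, mul_zero])
  rw [Finset.sum_congr rfl fun σ _ => by rw [hfac σ, mul_assoc]]
  rw [← Finset.mul_sum, FK_inner_sum hq β G A, mul_comm]
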